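/- Let K be a convex body in ℂⁿ, n ≥ 3, such that the orthogonal projection of K onto every (n−1)-dimensional complex subspace is complex-symmetric. Then K is complex-symmetric. -/

import Mathlib

open scoped Pointwise

noncomputable section Aux

variable {n : ℕ}

local notation "E" n => EuclideanSpace ℂ (Fin n)

/-- balancedness about a center -/
def HasCtr {n : ℕ} (A : Set (EuclideanSpace ℂ (Fin n))) (c : EuclideanSpace ℂ (Fin n)) : Prop :=
  ∀ ξ : ℂ, ‖ξ‖ = 1 → ξ • ((· - c) '' A) = (· - c) '' A

lemma hasCtr_reflect {A : Set (EuclideanSpace ℂ (Fin n))} {c : EuclideanSpace ℂ (Fin n)}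
    (h : HasCtr A c) {a : EuclideanSpace ℂ (Fin n)} (ha : a ∈ A) :
    (2 : ℂ) • c - a ∈ A := by
  have h1 := h (-1) (by norm_num)
  have hmem : (-1 : ℂ) • (a - c) ∈ (-1 : ℂ) • ((· - c) '' A) :=
    Set.smul_mem_smul_set ⟨a, ha, rfl⟩
  rw [h1] at hmem
  obtain ⟨b, hb, hb2⟩ := hmem
  have hb3 : b - c = -(a - c) := by
    simpa [neg_smul] using hb2
  have : b = (2:ℂ) • c - a := by
    have h2 : b = (b - c) + c := by abel
    rw [h2, hb3]; module
  rwa [← this]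

lemma hasCtr_unique {A : Set (EuclideanSpace ℂ (Fin n))} {c c' : EuclideanSpace ℂ (Fin n)}
    (hne : A.Nonempty) (hbd : Bornology.IsBounded A)
    (h : HasCtr A c) (h' : HasCtr A c') : c = c' := by
  by_contra hcc
  obtain ⟨a, ha⟩ := hne
  set d : EuclideanSpace ℂ (Fin n) := (2:ℂ) • c' - (2:ℂ) • c with hd
  have hdne : d ≠ 0 := by
    intro h0
    apply hcc
    have : (2:ℂ) • c' = (2:ℂ) • c := by
      have := sub_eq_zero.mp h0; linear_combination (norm := module) this
    have := smul_right_injective (EuclideanSpace ℂ (Fin n)) (by norm_num : (2:ℂ) ≠ 0) this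
    exact this.symm
  have hstep : ∀ x ∈ A, x + d ∈ A := by
    intro x hx
    have h1 := hasCtr_reflect h hx
    have h2 := hasCtr_reflect h' h1
    have : (2:ℂ) • c' - ((2:ℂ) • c - x) = x + d := by rw [hd]; abel
    rwa [this] at h2
  have hiter : ∀ k : ℕ, a + (k : ℂ) • d ∈ A := by
    intro k
    induction k with
    | zero => simpa using ha
    | succ m ih =>
        have := hstep _ ih
        have he : a + (m:ℂ) • d + d = a + ((m+1 : ℕ) : ℂ) • d := by
          push_cast; module
        rwa [he] at this
  obtain ⟨M, hM⟩ := hbd.subset_closedBall 0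
  have hdpos : 0 < ‖d‖ := norm_pos_iff.mpr hdne
  obtain ⟨k, hk⟩ := exists_nat_gt ((M + ‖a‖) / ‖d‖)
  have hmem := hM (hiter k)
  rw [Metric.mem_closedBall, dist_zero_right] at hmem
  have h1 : ‖(k:ℂ) • d‖ - ‖a‖ ≤ ‖a + (k:ℂ) • d‖ := by
    have h0 := norm_le_norm_add_norm_sub' ((k:ℂ) • d) (a + (k:ℂ) • d)
    have he : (k:ℂ) • d - (a + (k:ℂ) • d) = -a := by abel
    rw [he, norm_neg] at h0
    linarith
  have h2 : ‖(k:ℂ) • d‖ = k * ‖d‖ := by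
    rw [norm_smul]; simp
  have : (k : ℝ) * ‖d‖ ≤ M + ‖a‖ := by
    nlinarith [h1.trans hmem]
  rw [div_lt_iff₀ hdpos] at hk
  linarith


lemma hasCtr_image {A : Set (EuclideanSpace ℂ (Fin n))} {c : EuclideanSpace ℂ (Fin n)}
    (h : HasCtr A c) (T : EuclideanSpace ℂ (Fin n) →ₗ[ℂ] EuclideanSpace ℂ (Fin n)) :
    HasCtr (T '' A) (T c) := by
  intro ξ hξ
  have key : ∀ S : Set (EuclideanSpace ℂ (Fin n)), ξ • (T '' S) = T '' (ξ • S) := by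
    intro S
    ext y
    constructor
    · rintro ⟨z, ⟨x, hx, rfl⟩, rfl⟩
      exact ⟨ξ • x, Set.smul_mem_smul_set hx, by simp [map_smul]⟩
    · rintro ⟨z, ⟨x, hx, rfl⟩, rfl⟩
      exact ⟨T x, ⟨x, hx, rfl⟩, by simp [map_smul]⟩
  have him : (· - T c) '' (T '' A) = T '' ((· - c) '' A) := by
    rw [Set.image_image, Set.image_image]
    exact Set.image_congr fun x _ => (map_sub T x c).symm
  rw [him, key, h ξ hξ]

open Module in
lemma exists_hyperplane (hn : 3 ≤ n) (u v : EuclideanSpace ℂ (Fin n)) :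
    ∃ V : Submodule ℂ (EuclideanSpace ℂ (Fin n)),
      finrank ℂ V = n - 1 ∧ u ∈ V ∧ v ∈ V := by
  set W : Submodule ℂ (EuclideanSpace ℂ (Fin n)) := (ℂ ∙ u) ⊔ (ℂ ∙ v) with hW
  have hle1 : ∀ x : EuclideanSpace ℂ (Fin n), finrank ℂ (ℂ ∙ x) ≤ 1 := by
    intro x
    by_cases hx : x = 0
    · rw [hx, Submodule.span_zero_singleton]
      simp [finrank_bot]
    · rw [finrank_span_singleton hx]
  have hWle : finrank ℂ W ≤ 2 := by
    have h1 := Submodule.finrank_sup_add_finrank_inf_eq (ℂ ∙ u) (ℂ ∙ v)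
    have h2 := hle1 u
    have h3 := hle1 v
    rw [hW]
    omega
  have hEdim : finrank ℂ (EuclideanSpace ℂ (Fin n)) = n := finrank_euclideanSpace_fin
  have hWorth : 0 < finrank ℂ Wᗮ := by
    have := Submodule.finrank_add_finrank_orthogonal W
    omega
  have hWbot : Wᗮ ≠ ⊥ := by
    intro hb; rw [hb] at hWorth; simp at hWorth
  obtain ⟨t, htW, htne⟩ := Submodule.exists_mem_ne_zero_of_ne_bot hWbot
  refine ⟨(ℂ ∙ t)ᗮ, ?_, ?_, ?_⟩
  · have h1 : finrank ℂ (ℂ ∙ t) = 1 := finrank_span_singleton htne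
    have := Submodule.finrank_add_finrank_orthogonal (𝕜 := ℂ) (ℂ ∙ t)
    omega
  · rw [Submodule.mem_orthogonal]
    intro x hx
    obtain ⟨a, rfl⟩ := Submodule.mem_span_singleton.mp hx
    have h0 : inner ℂ u t = (0 : ℂ) :=
      (Submodule.mem_orthogonal W t).mp htW u (Submodule.mem_sup_left (Submodule.mem_span_singleton_self _))
    have h0' : inner ℂ t u = (0 : ℂ) := by
      rw [← inner_conj_symm, h0, map_zero]
    rw [inner_smul_left, h0', mul_zero]
  · rw [Submodule.mem_orthogonal]
    intro x hx
    obtain ⟨a, rfl⟩ := Submodule.mem_span_singleton.mp hx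
    have h0 : inner ℂ v t = (0 : ℂ) :=
      (Submodule.mem_orthogonal W t).mp htW v (Submodule.mem_sup_right (Submodule.mem_span_singleton_self _))
    have h0' : inner ℂ t v = (0 : ℂ) := by
      rw [← inner_conj_symm, h0, map_zero]
    rw [inner_smul_left, h0', mul_zero]

lemma inner_proj (V : Submodule ℂ (EuclideanSpace ℂ (Fin n)))
    {u : EuclideanSpace ℂ (Fin n)} (hu : u ∈ V) (z : EuclideanSpace ℂ (Fin n)) :
    (inner ℂ u (Submodule.orthogonalProjection V z : EuclideanSpace ℂ (Fin n)) : ℂ) = inner ℂ u z := by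
  have h := Submodule.sub_starProjection_mem_orthogonal (K := V) z
  have h0 : (inner ℂ u (z - (Submodule.orthogonalProjection V z : EuclideanSpace ℂ (Fin n))) : ℂ) = 0 :=
    (Submodule.mem_orthogonal V _).mp h u hu
  rw [inner_sub_right, sub_eq_zero] at h0
  exact h0.symm

lemma proj_comp (V : Submodule ℂ (EuclideanSpace ℂ (Fin n)))
    {u : EuclideanSpace ℂ (Fin n)} (hu : u ∈ V) (z : EuclideanSpace ℂ (Fin n)) :
    (Submodule.orthogonalProjection (ℂ ∙ u) ((Submodule.orthogonalProjection V z : EuclideanSpace ℂ (Fin n)))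
      : EuclideanSpace ℂ (Fin n))
    = (Submodule.orthogonalProjection (ℂ ∙ u) z : EuclideanSpace ℂ (Fin n)) := by
  show (ℂ ∙ u).starProjection (V.starProjection z) = (ℂ ∙ u).starProjection z
  rw [Submodule.starProjection_singleton ℂ, Submodule.starProjection_singleton ℂ,
    show inner ℂ u (V.starProjection z) = inner ℂ u z from inner_proj V hu z]

end Aux

def IsConvexBody {n : ℕ} (K : Set (EuclideanSpace ℂ (Fin n))) : Prop :=
  IsCompact K ∧ Convex ℝ K ∧ (interior K).Nonempty

def IsComplexSymmetric {n : ℕ} (A : Set (EuclideanSpace ℂ (Fin n))) : Prop :=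
  ∃ c : EuclideanSpace ℂ (Fin n),
    ∀ ξ : ℂ, ‖ξ‖ = 1 → ξ • ((· - c) '' A) = (· - c) '' A

theorem stmt9 {n : ℕ} (hn : 3 ≤ n)
    (K : Set (EuclideanSpace ℂ (Fin n))) (hK : IsConvexBody K)
    (hproj : ∀ V : Submodule ℂ (EuclideanSpace ℂ (Fin n)),
      Module.finrank ℂ V = n - 1 →
      IsComplexSymmetric
        ((fun x => (V.orthogonalProjection x : EuclideanSpace ℂ (Fin n))) '' K)) :
    IsComplexSymmetric K := by
  classical
  obtain ⟨hKcomp, hKconv, hKint⟩ := hK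
  have Kne : K.Nonempty := hKint.mono interior_subset
  set P : Submodule ℂ (EuclideanSpace ℂ (Fin n)) →
      EuclideanSpace ℂ (Fin n) → EuclideanSpace ℂ (Fin n) :=
    fun V x => (Submodule.orthogonalProjection V x : EuclideanSpace ℂ (Fin n)) with hPdef
  -- linear map version
  have hPlin : ∀ V : Submodule ℂ (EuclideanSpace ℂ (Fin n)),
      ∃ T : EuclideanSpace ℂ (Fin n) →ₗ[ℂ] EuclideanSpace ℂ (Fin n), ∀ x, T x = P V x :=
    fun V => ⟨(V.subtype).comp ((Submodule.orthogonalProjection V) :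
      EuclideanSpace ℂ (Fin n) →ₗ[ℂ] V), fun x => rfl⟩
  have hPcont : ∀ V : Submodule ℂ (EuclideanSpace ℂ (Fin n)), Continuous (P V) :=
    fun V => continuous_subtype_val.comp (Submodule.orthogonalProjection V).continuous
  have himgne : ∀ V, (P V '' K).Nonempty := fun V => Kne.image _
  have himgbd : ∀ V : Submodule ℂ (EuclideanSpace ℂ (Fin n)),
      Bornology.IsBounded (P V '' K) :=
    fun V => (hKcomp.image (hPcont V)).isBounded
  -- chosen centers
  have hctr : ∀ V : Submodule ℂ (EuclideanSpace ℂ (Fin n)),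
      Module.finrank ℂ V = n - 1 → ∃ c, HasCtr (P V '' K) c := fun V hV => hproj V hV
  let cV : ∀ V : Submodule ℂ (EuclideanSpace ℂ (Fin n)),
      Module.finrank ℂ V = n - 1 → EuclideanSpace ℂ (Fin n) :=
    fun V hV => (hctr V hV).choose
  have hcV : ∀ V hV, HasCtr (P V '' K) (cV V hV) := fun V hV => (hctr V hV).choose_spec
  -- projection of a center onto a line inside the hyperplane is the center of the line proj
  have hline : ∀ (V : Submodule ℂ (EuclideanSpace ℂ (Fin n))) (hV : Module.finrank ℂ V = n - 1)
      (u : EuclideanSpace ℂ (Fin n)), u ∈ V →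
      HasCtr (P (ℂ ∙ u) '' K) (P (ℂ ∙ u) (cV V hV)) := by
    intro V hV u huV
    obtain ⟨T, hT⟩ := hPlin (ℂ ∙ u)
    have h1 := hasCtr_image (hcV V hV) T
    have h2 : T '' (P V '' K) = P (ℂ ∙ u) '' K := by
      rw [Set.image_image]
      refine Set.image_congr fun x _ => ?_
      rw [hT]
      exact proj_comp V huV x
    rw [h2, hT] at h1
    exact h1
  -- agreement of centers on intersections
  have hagree : ∀ (V W : Submodule ℂ (EuclideanSpace ℂ (Fin n)))
      (hV : Module.finrank ℂ V = n - 1) (hW : Module.finrank ℂ W = n - 1)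
      (u : EuclideanSpace ℂ (Fin n)), u ∈ V → u ∈ W →
      (inner ℂ u (cV V hV) : ℂ) = inner ℂ u (cV W hW) := by
    intro V W hV hW u huV huW
    have h1 := hline V hV u huV
    have h2 := hline W hW u huW
    have heq : P (ℂ ∙ u) (cV V hV) = P (ℂ ∙ u) (cV W hW) :=
      hasCtr_unique (himgne _) (himgbd _) h1 h2
    have huL : u ∈ ℂ ∙ u := Submodule.mem_span_singleton_self u
    calc (inner ℂ u (cV V hV) : ℂ) = inner ℂ u (P (ℂ ∙ u) (cV V hV)) :=
          (inner_proj (ℂ ∙ u) huL _).symm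
      _ = inner ℂ u (P (ℂ ∙ u) (cV W hW)) := by rw [heq]
      _ = inner ℂ u (cV W hW) := inner_proj (ℂ ∙ u) huL _
  -- the conjugate-linear functional g
  have hhyp : ∀ u v : EuclideanSpace ℂ (Fin n), ∃ V : Submodule ℂ (EuclideanSpace ℂ (Fin n)),
      Module.finrank ℂ V = n - 1 ∧ u ∈ V ∧ v ∈ V := exists_hyperplane hn
  let g : EuclideanSpace ℂ (Fin n) → ℂ :=
    fun u => inner ℂ u (cV (hhyp u u).choose (hhyp u u).choose_spec.1)
  have hg : ∀ (V : Submodule ℂ (EuclideanSpace ℂ (Fin n)))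
      (hV : Module.finrank ℂ V = n - 1) (u : EuclideanSpace ℂ (Fin n)), u ∈ V →
      g u = inner ℂ u (cV V hV) :=
    fun V hV u hu =>
      hagree _ V (hhyp u u).choose_spec.1 hV u (hhyp u u).choose_spec.2.1 hu
  have hgadd : ∀ u v, g (u + v) = g u + g v := by
    intro u v
    obtain ⟨V, hV, huV, hvV⟩ := hhyp u v
    rw [hg V hV u huV, hg V hV v hvV, hg V hV (u + v) (V.add_mem huV hvV), inner_add_left]
  have hgsmul : ∀ (a : ℂ) u, g (a • u) = starRingEnd ℂ a * g u := by
    intro a u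
    obtain ⟨V, hV, huV, _⟩ := hhyp u u
    rw [hg V hV u huV, hg V hV (a • u) (V.smul_mem a huV), inner_smul_left]
  have hg0 : g 0 = 0 := by
    obtain ⟨V, hV, hu, -⟩ := hhyp 0 0
    rw [hg V hV 0 hu, inner_zero_left]
  have hgsum : ∀ (s : Finset (Fin n)) (f : Fin n → EuclideanSpace ℂ (Fin n)),
      g (∑ j ∈ s, f j) = ∑ j ∈ s, g (f j) := by
    intro s f
    induction s using Finset.induction with
    | empty => simpa using hg0
    | insert _ _ hj ih =>
        rw [Finset.sum_insert hj, Finset.sum_insert hj, hgadd, ih]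
  -- the global center
  let c : EuclideanSpace ℂ (Fin n) :=
    (EuclideanSpace.equiv (Fin n) ℂ).symm (fun j => g (EuclideanSpace.single j 1))
  have hcj : ∀ j, c j = g (EuclideanSpace.single j 1) := fun j => rfl
  have hinner : ∀ u : EuclideanSpace ℂ (Fin n), (inner ℂ u c : ℂ) = g u := by
    intro u
    have hrep : u = ∑ j, u j • EuclideanSpace.single j 1 := by
      ext j
      rw [WithLp.ofLp_sum, Finset.sum_apply]
      simp [EuclideanSpace.single_apply]
    calc (inner ℂ u c : ℂ) = ∑ j, starRingEnd ℂ (u j) * c j := by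
          simp [PiLp.inner_apply, RCLike.inner_apply, mul_comm]
      _ = ∑ j, starRingEnd ℂ (u j) * g (EuclideanSpace.single j 1) := by
          simp only [hcj]
      _ = ∑ j, g (u j • EuclideanSpace.single j 1) := by
          refine Finset.sum_congr rfl fun j _ => (hgsmul _ _).symm
      _ = g u := by rw [← hgsum]; exact congrArg g hrep.symm
  -- key: c projects correctly onto each hyperplane
  have hkey : ∀ (V : Submodule ℂ (EuclideanSpace ℂ (Fin n)))
      (hV : Module.finrank ℂ V = n - 1) (u : EuclideanSpace ℂ (Fin n)), u ∈ V →
      (inner ℂ u c : ℂ) = inner ℂ u (cV V hV) := by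
    intro V hV u hu
    rw [hinner u, hg V hV u hu]
  -- main inclusion
  have hsub : ∀ ξ : ℂ, ‖ξ‖ = 1 → ∀ x ∈ K, c + ξ • (x - c) ∈ K := by
    intro ξ hξ x hx
    by_contra hy
    set y : EuclideanSpace ℂ (Fin n) := c + ξ • (x - c) with hydef
    obtain ⟨f, s, hfK, hfy⟩ :=
      geometric_hahn_banach_closed_point hKconv hKcomp.isClosed hy
    set F : EuclideanSpace ℂ (Fin n) →L[ℂ] ℂ := f.extendRCLike with hFdef
    have hFre : ∀ z, RCLike.re (F z) = f z := fun z => by rw [hFdef]; simp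
    obtain ⟨w, hw⟩ := (InnerProductSpace.toDual ℂ (EuclideanSpace ℂ (Fin n))).surjective F
    have hwz : ∀ z, (inner ℂ w z : ℂ) = F z := by
      intro z
      rw [← hw]
      rfl
    obtain ⟨V, hV, hwV, -⟩ := hhyp w w
    -- use the complex symmetry of the projection
    have hPx : P V x ∈ P V '' K := ⟨x, hx, rfl⟩
    have hmem : ξ • (P V x - cV V hV) ∈ ξ • ((· - cV V hV) '' (P V '' K)) :=
      Set.smul_mem_smul_set ⟨P V x, hPx, rfl⟩
    rw [hcV V hV ξ hξ] at hmem
    obtain ⟨z, ⟨x', hx', rfl⟩, hz⟩ := hmem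
    -- hz : P V x' - cV V hV = ξ • (P V x - cV V hV)
    have hinner_y : (inner ℂ w y : ℂ) = inner ℂ w x' := by
      have h1 : (inner ℂ w y : ℂ) = inner ℂ w c + ξ * (inner ℂ w x - inner ℂ w c) := by
        rw [hydef]
        simp [inner_add_right, inner_smul_right, inner_sub_right]
      have h2 : (inner ℂ w c : ℂ) = inner ℂ w (cV V hV) := hkey V hV w hwV
      have h3 : (inner ℂ w x : ℂ) = inner ℂ w (P V x) := (inner_proj V hwV x).symm
      have h4 : (inner ℂ w x' : ℂ) = inner ℂ w (P V x') := (inner_proj V hwV x').symm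
      have h5 : (inner ℂ w (P V x') : ℂ) = inner ℂ w (cV V hV) + inner ℂ w (P V x' - cV V hV) := by
        rw [inner_sub_right]; ring
      have hz' : P V x' - cV V hV = ξ • (P V x - cV V hV) := hz
      have h6 : (inner ℂ w (P V x' - cV V hV) : ℂ) = ξ * inner ℂ w (P V x - cV V hV) := by
        rw [hz', inner_smul_right]
      rw [h1, h2, h3, h4, h5, h6, inner_sub_right]
    have hfy' : f y = f x' := by
      rw [← hFre y, ← hFre x', ← hwz y, ← hwz x', hinner_y]
    have := hfK x' hx'
    rw [← hfy'] at this
    linarith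
  refine ⟨c, fun ξ hξ => ?_⟩
  have hξ0 : ξ ≠ 0 := by
    intro h; rw [h] at hξ; simp at hξ
  have hss : ∀ ζ : ℂ, ‖ζ‖ = 1 → ζ • ((· - c) '' K) ⊆ (· - c) '' K := by
    rintro ζ hζ z ⟨z', ⟨x, hx, rfl⟩, rfl⟩
    exact ⟨c + ζ • (x - c), hsub ζ hζ x hx, by simp⟩
  refine Set.Subset.antisymm (hss ξ hξ) ?_
  have hξinv : ‖ξ⁻¹‖ = 1 := by
    rw [norm_inv, hξ]; norm_num
  intro z hz
  have h1 : ξ⁻¹ • z ∈ ξ⁻¹ • ((· - c) '' K) := Set.smul_mem_smul_set hz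
  have h2 := hss ξ⁻¹ hξinv h1
  refine ⟨ξ⁻¹ • z, h2, ?_⟩
  show ξ • ξ⁻¹ • z = z
  rw [smul_smul, mul_inv_cancel₀ hξ0, one_smul]
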